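/- arXiv:2109.00762 — 2 statements merged into one kernel-verified Lean document; each statement's English description precedes it below -/
import Mathlib

section
/- If a is a nilpotent n×n matrix over F_q, then K_n(a) = (−1)^n q^{n(n−1)/2}. In particular K_n(0) = (−1)^n q^{n(n−1)/2}. -/
open Matrix BigOperators Finset

set_option linter.unusedSectionVars false
set_option maxHeartbeats 1000000

/-- The matrix Kloosterman sum `K_n(a)`. -/
noncomputable def matKloosterman {F : Type*} [Field F] [Fintype F] [DecidableEq F]
    (n : ℕ) (φ : AddChar F ℂ) (a : Matrix (Fin n) (Fin n) F) : ℂ :=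
  ∑ x : GL (Fin n) F,
    φ (Matrix.trace (a * (x : Matrix (Fin n) (Fin n) F) +
        ((x⁻¹ : GL (Fin n) F) : Matrix (Fin n) (Fin n) F)))

namespace MatKloos

variable {F : Type*} [Field F] [Fintype F] [DecidableEq F] {m : ℕ}

/-! ### Character sums -/

lemma sum_char (φ : AddChar F ℂ) (hφ : φ ≠ 1) : ∑ t : F, φ t = 0 := by
  rw [AddChar.sum_eq_zero_iff_ne_zero]
  rwa [AddChar.one_eq_zero] at hφ

lemma sum_char_mul (φ : AddChar F ℂ) (hφ : φ ≠ 1) (c : F) :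
    ∑ t : F, φ (c * t) = if c = 0 then (Fintype.card F : ℂ) else 0 := by
  split_ifs with hc
  · simp [hc, Finset.card_univ]
  · rw [← sum_char φ hφ]
    exact Fintype.sum_equiv (Equiv.mulLeft₀ c hc) _ _ fun t => by simp
lemma sum_char_units (φ : AddChar F ℂ) (hφ : φ ≠ 1) : ∑ α : Fˣ, φ ↑α = -1 := by
  have h : ∑ t ∈ Finset.univ.erase (0 : F), φ t = -1 := by
    have h0 := sum_char φ hφ
    rw [← Finset.add_sum_erase Finset.univ φ (Finset.mem_univ (0 : F)),
      AddChar.map_zero_eq_one] at h0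
    linear_combination h0
  rw [← h]
  refine Finset.sum_bij (fun (α : Fˣ) _ => (↑α : F)) ?_ ?_ ?_ ?_
  · intro α _; exact Finset.mem_erase.2 ⟨α.ne_zero, Finset.mem_univ _⟩
  · intro α _ β _ h; exact Units.ext h
  · intro t ht
    exact ⟨Units.mk0 t (Finset.mem_erase.1 ht).1, Finset.mem_univ _, rfl⟩
  · intro α _; rfl

lemma sum_char_pi (φ : AddChar F ℂ) (hφ : φ ≠ 1) (c : Fin m → F) :
    ∑ w : Fin m → F, φ (-∑ j, c j * w j)
      = if (∀ j, c j = 0) then ((Fintype.card F : ℂ)) ^ m else 0 := by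
  have step1 : ∑ w : Fin m → F, φ (-∑ j, c j * w j) = ∑ w : Fin m → F, φ (∑ j, c j * w j) := by
    refine Fintype.sum_equiv (Equiv.neg (Fin m → F)) _ _ fun w => ?_
    simp [← Finset.sum_neg_distrib]
  have step2 : ∀ w : Fin m → F, φ (∑ j, c j * w j) = ∏ j, φ (c j * w j) := by
    intro w
    classical
    induction (Finset.univ : Finset (Fin m)) using Finset.cons_induction with
    | empty => simp
    | cons j s hj ih => rw [Finset.sum_cons, Finset.prod_cons, AddChar.map_add_eq_mul, ih]
  rw [step1]
  simp only [step2]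
  rw [← Fintype.piFinset_univ, ← Finset.prod_univ_sum (fun _ => (Finset.univ : Finset F)) (fun j t => φ (c j * t))]
  have factor : ∀ j, (∑ t : F, φ (c j * t)) = if c j = 0 then (Fintype.card F : ℂ) else 0 :=
    fun j => sum_char_mul φ hφ (c j)
  simp only [factor]
  split_ifs with hall
  · simp [hall, Finset.prod_const, Finset.card_univ]
  · push_neg at hall
    obtain ⟨j0, hj0⟩ := hall
    exact Finset.prod_eq_zero (Finset.mem_univ j0) (by simp [hj0])

/-! ### Block matrices -/

def blk (α : F) (β : Fin m → F) (δ : Matrix (Fin m) (Fin m) F) :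
    Matrix (Fin (m+1)) (Fin (m+1)) F :=
  Matrix.of (Fin.cons (Fin.cons α β) (fun i => Fin.cons 0 (δ i)))

@[simp] lemma blk00 (α : F) (β : Fin m → F) (δ : Matrix (Fin m) (Fin m) F) :
    blk α β δ 0 0 = α := rfl
@[simp] lemma blk0s (α : F) (β : Fin m → F) (δ : Matrix (Fin m) (Fin m) F) (j : Fin m) :
    blk α β δ 0 j.succ = β j := rfl
@[simp] lemma blks0 (α : F) (β : Fin m → F) (δ : Matrix (Fin m) (Fin m) F) (i : Fin m) :
    blk α β δ i.succ 0 = 0 := rfl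
@[simp] lemma blkss (α : F) (β : Fin m → F) (δ : Matrix (Fin m) (Fin m) F) (i j : Fin m) :
    blk α β δ i.succ j.succ = δ i j := rfl

lemma blk_mul (α α' : F) (β β' : Fin m → F) (δ δ' : Matrix (Fin m) (Fin m) F) :
    blk α β δ * blk α' β' δ' = blk (α * α') (α • β' + β ᵥ* δ') (δ * δ') := by
  ext i j
  refine Fin.cases ?_ (fun i => ?_) i <;> refine Fin.cases ?_ (fun j => ?_) j <;>
    simp [Matrix.mul_apply, Fin.sum_univ_succ, Matrix.vecMul, dotProduct, mul_comm]
lemma blk_one : (blk 1 0 1 : Matrix (Fin (m+1)) (Fin (m+1)) F) = 1 := by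
  ext i j
  refine Fin.cases ?_ (fun i => ?_) i <;> refine Fin.cases ?_ (fun j => ?_) j <;>
    simp [Matrix.one_apply, Fin.succ_ne_zero, (Fin.succ_ne_zero _).symm, Fin.succ_inj]
lemma blk_trace (α : F) (β : Fin m → F) (δ : Matrix (Fin m) (Fin m) F) :
    (blk α β δ).trace = α + δ.trace := by
  simp [Matrix.trace, Fin.sum_univ_succ, Matrix.diag]

/-- the unit `[[α, β],[0, δ]]` of `GL (Fin (m+1)) F`. -/
def blkUnit (α : Fˣ) (β : Fin m → F) (δ : GL (Fin m) F) : GL (Fin (m+1)) F where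
  val := blk α.val β δ.val
  inv := blk (α⁻¹).val (-((α⁻¹).val • (β ᵥ* (δ⁻¹).val))) (δ⁻¹).val
  val_inv := by
    rw [blk_mul, ← Units.val_mul, ← Units.val_mul, mul_inv_cancel, mul_inv_cancel]
    rw [← blk_one]
    congr 1
    simp [smul_smul, ← Units.val_mul]
  inv_val := by
    rw [blk_mul, ← Units.val_mul, ← Units.val_mul, inv_mul_cancel, inv_mul_cancel]
    rw [← blk_one]
    congr 1
    have h : (β ᵥ* (δ⁻¹).val) ᵥ* δ.val = β := by
      rw [Matrix.vecMul_vecMul, ← Units.val_mul, inv_mul_cancel, Units.val_one, Matrix.vecMul_one]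
    rw [Matrix.neg_vecMul, Matrix.smul_vecMul, h]
    simp [smul_smul, ← Units.val_mul]

@[simp] lemma blkUnit_val (α : Fˣ) (β : Fin m → F) (δ : GL (Fin m) F) :
    (blkUnit α β δ : Matrix (Fin (m+1)) (Fin (m+1)) F) = blk α.val β δ.val := rfl

lemma blkUnit_inv (α : Fˣ) (β : Fin m → F) (δ : GL (Fin m) F) :
    (blkUnit α β δ)⁻¹ = blkUnit α⁻¹ (-((α⁻¹).val • (β ᵥ* (δ⁻¹).val))) δ⁻¹ :=
  Units.ext rfl

lemma trace_mul_blk (a : Matrix (Fin (m+1)) (Fin (m+1)) F) (ha : ∀ i, a i 0 = 0)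
    (α : F) (β : Fin m → F) (δ : Matrix (Fin m) (Fin m) F) :
    (a * blk α β δ).trace = (a.submatrix Fin.succ Fin.succ * δ).trace := by
  simp only [Matrix.trace, Matrix.diag, Matrix.mul_apply, Fin.sum_univ_succ, ha,
    blk00, blk0s, blks0, blkss, Matrix.submatrix_apply, zero_mul, mul_zero,
    Finset.sum_const_zero, add_zero, zero_add]

/-- every unit whose matrix has vanishing lower-left column is a `blkUnit`. -/
lemma eq_blkUnit (x : GL (Fin (m+1)) F)
    (h : ∀ i : Fin m, (x : Matrix (Fin (m+1)) (Fin (m+1)) F) i.succ 0 = 0) :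
    ∃ (α : Fˣ) (β : Fin m → F) (δ : GL (Fin m) F), x = blkUnit α β δ := by
  set A : Matrix (Fin (m+1)) (Fin (m+1)) F := ↑x with hA
  have hdet : A.det ≠ 0 := by
    have : IsUnit A.det := (Matrix.isUnit_iff_isUnit_det A).1 ⟨x, rfl⟩
    exact this.ne_zero
  have hexp : A.det = A 0 0 * (A.submatrix Fin.succ Fin.succ).det := by
    rw [Matrix.det_succ_column_zero]
    rw [Fin.sum_univ_succ]
    simp [h, Fin.succAbove_zero]
  rw [hexp] at hdet
  have hα : A 0 0 ≠ 0 := left_ne_zero_of_mul hdet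
  have hδ : (A.submatrix Fin.succ Fin.succ).det ≠ 0 := right_ne_zero_of_mul hdet
  refine ⟨Units.mk0 (A 0 0) hα, fun j => A 0 j.succ,
    Matrix.GeneralLinearGroup.mkOfDetNeZero _ hδ, ?_⟩
  apply Units.ext
  show A = _
  rw [blkUnit_val]
  ext i j
  refine Fin.cases ?_ (fun i => ?_) i <;> refine Fin.cases ?_ (fun j => ?_) j
  · rfl
  · rfl
  · simp [h]
  · rfl

/-! ### permutation and rank-one units -/

def permMat (σ : Equiv.Perm (Fin (m+1))) : Matrix (Fin (m+1)) (Fin (m+1)) F :=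
  Matrix.of fun i j => if σ j = i then (1 : F) else 0

lemma permMat_mul (σ τ : Equiv.Perm (Fin (m+1))) :
    (permMat σ * permMat τ : Matrix (Fin (m+1)) (Fin (m+1)) F) = permMat (σ * τ) := by
  ext i j
  simp only [permMat, Matrix.mul_apply, Matrix.of_apply, ite_mul, one_mul, zero_mul]
  rw [Finset.sum_eq_single (τ j)]
  · simp; rfl
  · intro k _ hk; simp [Ne.symm hk, hk]
  · simp

lemma permMat_one : (permMat 1 : Matrix (Fin (m+1)) (Fin (m+1)) F) = 1 := by
  ext i j
  simp [permMat, Matrix.one_apply, eq_comm]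

def permUnit (σ : Equiv.Perm (Fin (m+1))) : GL (Fin (m+1)) F where
  val := permMat σ
  inv := permMat σ⁻¹
  val_inv := by rw [permMat_mul, mul_inv_cancel, permMat_one]
  inv_val := by rw [permMat_mul, inv_mul_cancel, permMat_one]

lemma permMat_mulVec (σ : Equiv.Perm (Fin (m+1))) (u : Fin (m+1) → F) :
    (permMat σ : Matrix (Fin (m+1)) (Fin (m+1)) F).mulVec u = fun i => u (σ⁻¹ i) := by
  funext i
  simp only [Matrix.mulVec, dotProduct, permMat, Matrix.of_apply, ite_mul, one_mul,
    zero_mul]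
  rw [Finset.sum_eq_single (σ⁻¹ i)]
  · simp
  · intro k _ hk
    have : σ k ≠ i := fun hc => hk (by simp [← hc])
    simp [this]
  · simp

def colMat (u : Fin (m+1) → F) : Matrix (Fin (m+1)) (Fin (m+1)) F :=
  Matrix.of fun i j => if j = 0 then u i else 0

lemma colMat_mul_colMat (u u' : Fin (m+1) → F) :
    colMat u * colMat u' = colMat ((u' 0) • u) := by
  ext i j
  simp [colMat, Matrix.mul_apply, Fin.sum_univ_succ, Fin.succ_ne_zero, mul_comm]

lemma colMat_add (u u' : Fin (m+1) → F) : colMat (u + u') = colMat u + colMat u' := by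
  ext i j; by_cases h : j = 0 <;> simp [colMat, h]

lemma colMat_smul (c : F) (u : Fin (m+1) → F) : colMat (c • u) = c • colMat u := by
  ext i j; by_cases h : j = 0 <;> simp [colMat, h]

lemma colMat_zero : colMat (0 : Fin (m+1) → F) = 0 := by
  ext i j; by_cases h : j = 0 <;> simp [colMat, h]

/-- the unit `1 + colMat u`, for `1 + u 0 ≠ 0`. -/
def colUnit (u : Fin (m+1) → F) (hu : 1 + u 0 ≠ 0) : GL (Fin (m+1)) F where
  val := 1 + colMat u
  inv := 1 + colMat ((-(1 + u 0)⁻¹) • u)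
  val_inv := by
    set s : F := -(1 + u 0)⁻¹ with hs
    have : (1 + colMat u) * (1 + colMat (s • u))
        = 1 + colMat (s • u + u + ((s • u) 0) • u) := by
      rw [mul_add, add_mul, add_mul, one_mul, mul_one, colMat_mul_colMat,
        colMat_add, colMat_add]
      simp only [one_mul, mul_one]
      abel
    rw [this]
    have huz : s • u + u + ((s • u) 0) • u = 0 := by
      have : s • u + u + ((s • u) 0) • u = (s + 1 + s * u 0) • u := by
        simp [add_smul, smul_smul, Pi.smul_apply, smul_eq_mul]
      rw [this, hs]
      have : -(1 + u 0)⁻¹ + 1 + -(1 + u 0)⁻¹ * u 0 = 1 - (1 + u 0)⁻¹ * (1 + u 0) := by ring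
      rw [this, inv_mul_cancel₀ hu]
      simp
    rw [huz, colMat_zero, add_zero]
  inv_val := by
    set s : F := -(1 + u 0)⁻¹ with hs
    have : (1 + colMat (s • u)) * (1 + colMat u)
        = 1 + colMat (u + s • u + (u 0) • (s • u)) := by
      rw [mul_add, add_mul, add_mul, one_mul, mul_one, colMat_mul_colMat,
        colMat_add, colMat_add]
      simp only [one_mul, mul_one]
      abel
    rw [this]
    have huz : u + s • u + (u 0) • (s • u) = 0 := by
      have : u + s • u + (u 0) • (s • u) = (1 + s + u 0 * s) • u := by
        simp [add_smul, smul_smul, Pi.smul_apply, smul_eq_mul, mul_comm]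
      rw [this, hs]
      have : 1 + -(1 + u 0)⁻¹ + u 0 * -(1 + u 0)⁻¹ = 1 - (1 + u 0)⁻¹ * (1 + u 0) := by ring
      rw [this, inv_mul_cancel₀ hu]
      simp
    rw [huz, colMat_zero, add_zero]

/-- an invertible matrix with prescribed first column `v ≠ 0`. -/
lemma exists_unit_col (v : Fin (m+1) → F) (hv : v ≠ 0) :
    ∃ g : GL (Fin (m+1)) F,
      (g : Matrix (Fin (m+1)) (Fin (m+1)) F).mulVec (Pi.single 0 1) = v := by
  obtain ⟨i0, hi0⟩ : ∃ i, v i ≠ 0 := Function.ne_iff.1 hv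
  set σ : Equiv.Perm (Fin (m+1)) := Equiv.swap 0 i0 with hσ
  set u : Fin (m+1) → F := (fun i => v (σ i)) - Pi.single 0 1 with hu
  have hu0 : 1 + u 0 ≠ 0 := by
    have : u 0 = v i0 - 1 := by simp [hu, hσ, Equiv.swap_apply_left]
    rw [this]
    simpa using hi0
  refine ⟨permUnit σ * colUnit u hu0, ?_⟩
  have hcol : (1 + colMat u).mulVec (Pi.single (0 : Fin (m+1)) (1:F)) = fun i => v (σ i) := by
    funext i
    simp only [Matrix.add_mulVec, Matrix.one_mulVec, Pi.add_apply]
    have : (colMat u).mulVec (Pi.single (0 : Fin (m+1)) (1:F)) i = u i := by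
      simp [colMat, Matrix.mulVec, dotProduct, Fin.sum_univ_succ, Fin.succ_ne_zero]
    rw [this]
    simp [hu, Pi.single_apply]
  show (((permUnit σ : GL (Fin (m+1)) F) : Matrix (Fin (m+1)) (Fin (m+1)) F) *
      ((colUnit u hu0 : GL (Fin (m+1)) F) : Matrix (Fin (m+1)) (Fin (m+1)) F)).mulVec
      (Pi.single 0 1) = v
  rw [← Matrix.mulVec_mulVec]
  show (permMat σ).mulVec ((1 + colMat u).mulVec (Pi.single 0 1)) = v
  rw [hcol, permMat_mulVec]
  funext i
  simp [hσ]

/-! ### the unipotent row group -/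

def rowMat (w : Fin m → F) : Matrix (Fin (m+1)) (Fin (m+1)) F :=
  Matrix.of (fun i j => if i = 0 then (Fin.cons (0:F) w : Fin (m+1) → F) j else 0)

lemma rowMat_mul_self (w : Fin m → F) : rowMat w * rowMat w = 0 := by
  ext i j
  simp [rowMat, Matrix.mul_apply, Fin.sum_univ_succ, Fin.succ_ne_zero]

lemma mul_rowMat_eq_zero (a : Matrix (Fin (m+1)) (Fin (m+1)) F) (ha : ∀ i, a i 0 = 0)
    (w : Fin m → F) : a * rowMat w = 0 := by
  ext i j
  simp [rowMat, Matrix.mul_apply, Fin.sum_univ_succ, Fin.succ_ne_zero, ha]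

lemma trace_mul_rowMat (y : Matrix (Fin (m+1)) (Fin (m+1)) F) (w : Fin m → F) :
    (y * rowMat w).trace = ∑ j, y j.succ 0 * w j := by
  simp [Matrix.trace, Matrix.diag, Matrix.mul_apply, rowMat, Fin.sum_univ_succ,
    Fin.succ_ne_zero]

def rowUnit (w : Fin m → F) : GL (Fin (m+1)) F where
  val := 1 + rowMat w
  inv := 1 - rowMat w
  val_inv := by
    have h := rowMat_mul_self w
    noncomm_ring
    rw [h]; simp
  inv_val := by
    have h := rowMat_mul_self w
    noncomm_ring
    rw [h]; simp

@[simp] lemma rowUnit_val (w : Fin m → F) :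
    (rowUnit w : Matrix (Fin (m+1)) (Fin (m+1)) F) = 1 + rowMat w := rfl
lemma rowUnit_inv (w : Fin m → F) :
    (((rowUnit w)⁻¹ : GL (Fin (m+1)) F) : Matrix (Fin (m+1)) (Fin (m+1)) F) = 1 - rowMat w := rfl

/-! ### conjugation invariance -/

lemma matK_def (n : ℕ) (φ : AddChar F ℂ) (a : Matrix (Fin n) (Fin n) F) :
    matKloosterman n φ a = ∑ x : GL (Fin n) F,
      φ (Matrix.trace (a * (x : Matrix (Fin n) (Fin n) F) +
        ((x⁻¹ : GL (Fin n) F) : Matrix (Fin n) (Fin n) F))) := rfl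

lemma conj_inv (φ : AddChar F ℂ) {n : ℕ} (a : Matrix (Fin n) (Fin n) F) (g : GL (Fin n) F) :
    matKloosterman n φ
      (((g⁻¹ : GL (Fin n) F) : Matrix (Fin n) (Fin n) F) * a * (g : Matrix (Fin n) (Fin n) F))
      = matKloosterman n φ a := by
  rw [matK_def, matK_def]
  refine Fintype.sum_equiv ((Equiv.mulLeft g).trans (Equiv.mulRight g⁻¹)) _ _ fun x => ?_
  simp only [Equiv.trans_apply, Equiv.coe_mulLeft, Equiv.coe_mulRight]
  congr 1
  have hgg : ((g⁻¹ : GL (Fin n) F) : Matrix (Fin n) (Fin n) F) * (g : Matrix (Fin n) (Fin n) F)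
      = 1 := by rw [← Units.val_mul, inv_mul_cancel, Units.val_one]
  have hinv : (((g * x * g⁻¹)⁻¹ : GL (Fin n) F) : Matrix (Fin n) (Fin n) F)
      = (g : Matrix (Fin n) (Fin n) F) * ((x⁻¹ : GL (Fin n) F) : Matrix (Fin n) (Fin n) F) *
        ((g⁻¹ : GL (Fin n) F) : Matrix (Fin n) (Fin n) F) := by
    have : (g * x * g⁻¹)⁻¹ = g * x⁻¹ * g⁻¹ := by
      rw [_root_.mul_inv_rev, _root_.mul_inv_rev, inv_inv, mul_assoc]
    rw [this]; rfl
  have hval : ((↑(g * x * g⁻¹) : Matrix (Fin n) (Fin n) F))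
      = (g : Matrix (Fin n) (Fin n) F) * (x : Matrix (Fin n) (Fin n) F) *
        ((g⁻¹ : GL (Fin n) F) : Matrix (Fin n) (Fin n) F) := rfl
  have hgg' : (g : Matrix (Fin n) (Fin n) F) * ((g⁻¹ : GL (Fin n) F) : Matrix (Fin n) (Fin n) F)
      = 1 := by rw [← Units.val_mul, mul_inv_cancel, Units.val_one]
  have K1' : ∀ Z : Matrix (Fin n) (Fin n) F,
      (g : Matrix (Fin n) (Fin n) F) *
        (((g⁻¹ : GL (Fin n) F) : Matrix (Fin n) (Fin n) F) * Z) = Z :=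
    fun Z => by rw [← mul_assoc, hgg', one_mul]
  rw [hinv, hval]
  rw [show a * ((g : Matrix (Fin n) (Fin n) F) * (x : Matrix (Fin n) (Fin n) F) *
        ((g⁻¹ : GL (Fin n) F) : Matrix (Fin n) (Fin n) F)) +
        (g : Matrix (Fin n) (Fin n) F) * ((x⁻¹ : GL (Fin n) F) : Matrix (Fin n) (Fin n) F) *
        ((g⁻¹ : GL (Fin n) F) : Matrix (Fin n) (Fin n) F)
      = (g : Matrix (Fin n) (Fin n) F) *
          ((((g⁻¹ : GL (Fin n) F) : Matrix (Fin n) (Fin n) F) * a *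
            (g : Matrix (Fin n) (Fin n) F)) * (x : Matrix (Fin n) (Fin n) F) +
            ((x⁻¹ : GL (Fin n) F) : Matrix (Fin n) (Fin n) F)) *
          ((g⁻¹ : GL (Fin n) F) : Matrix (Fin n) (Fin n) F) from by
    simp only [mul_add, add_mul, mul_assoc, K1']]
  rw [Matrix.trace_units_conj]

/-! ### nilpotency of the lower-right block -/

lemma pow_col0 (a : Matrix (Fin (m+1)) (Fin (m+1)) F) (ha : ∀ i, a i 0 = 0) :
    ∀ (t : ℕ) (i : Fin m), (a ^ t) i.succ 0 = 0 := by
  intro t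
  induction t with
  | zero => intro i; simp [Matrix.one_apply, Fin.succ_ne_zero]
  | succ t _ => intro i; rw [pow_succ]; simp [Matrix.mul_apply, ha]

lemma sub_pow (a : Matrix (Fin (m+1)) (Fin (m+1)) F) (ha : ∀ i, a i 0 = 0) (t : ℕ) :
    (a ^ t).submatrix Fin.succ Fin.succ = (a.submatrix Fin.succ Fin.succ) ^ t := by
  induction t with
  | zero =>
    ext i j
    simp [Matrix.one_apply, Fin.succ_inj]
  | succ t ih =>
    ext i j
    rw [pow_succ, pow_succ, ← ih]
    simp only [Matrix.submatrix_apply, Matrix.mul_apply, Fin.sum_univ_succ,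
      pow_col0 a ha t i, zero_mul, zero_add]

lemma sub_nilpotent (a : Matrix (Fin (m+1)) (Fin (m+1)) F) (ha : ∀ i, a i 0 = 0)
    (hn : IsNilpotent a) : IsNilpotent (a.submatrix Fin.succ Fin.succ) := by
  obtain ⟨k, hk⟩ := hn
  refine ⟨k, ?_⟩
  rw [← sub_pow a ha k, hk]
  rfl

lemma exists_conj (a : Matrix (Fin (m+1)) (Fin (m+1)) F) (hn : IsNilpotent a) :
    ∃ g : GL (Fin (m+1)) F, ∀ i,
      (((g⁻¹ : GL (Fin (m+1)) F) : Matrix (Fin (m+1)) (Fin (m+1)) F) * a *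
        (g : Matrix (Fin (m+1)) (Fin (m+1)) F)) i 0 = 0 := by
  have hdet : a.det = 0 := by
    obtain ⟨k, hk⟩ := hn
    rcases Nat.eq_zero_or_pos k with h0 | hpos
    · subst h0
      rw [pow_zero] at hk
      exfalso
      have := congrFun (congrFun hk 0) 0
      rw [Matrix.one_apply_eq] at this
      exact one_ne_zero this
    · have hd := congrArg Matrix.det hk
      rw [Matrix.det_pow, Matrix.det_zero] at hd
      exact pow_eq_zero_iff hpos.ne' |>.1 hd
  obtain ⟨v, hv0, hv⟩ := (Matrix.exists_mulVec_eq_zero_iff).2 hdet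
  obtain ⟨g, hg⟩ := exists_unit_col v hv0
  refine ⟨g, fun i => ?_⟩
  have hz : (((g⁻¹ : GL (Fin (m+1)) F) : Matrix (Fin (m+1)) (Fin (m+1)) F) * a *
      (g : Matrix (Fin (m+1)) (Fin (m+1)) F)).mulVec (Pi.single 0 1) = 0 := by
    rw [← Matrix.mulVec_mulVec, hg, ← Matrix.mulVec_mulVec, hv, Matrix.mulVec_zero]
  have := congrFun hz i
  simpa using this

/-! ### the averaging step -/

lemma key_w (φ : AddChar F ℂ) (a : Matrix (Fin (m+1)) (Fin (m+1)) F)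
    (ha : ∀ i, a i 0 = 0) (w : Fin m → F) :
    matKloosterman (m+1) φ a
      = ∑ x : GL (Fin (m+1)) F,
          φ (Matrix.trace (a * (x : Matrix (Fin (m+1)) (Fin (m+1)) F) +
              ((x⁻¹ : GL (Fin (m+1)) F) : Matrix (Fin (m+1)) (Fin (m+1)) F)))
            * φ (-∑ j : Fin m,
                ((x⁻¹ : GL (Fin (m+1)) F) : Matrix (Fin (m+1)) (Fin (m+1)) F) j.succ 0 * w j) := by
  rw [matK_def]
  refine (Fintype.sum_equiv (Equiv.mulLeft (rowUnit w)) _ _ fun x => ?_).symm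
  simp only [Equiv.coe_mulLeft]
  have hval : ((↑(rowUnit w * x) : Matrix (Fin (m+1)) (Fin (m+1)) F))
      = (1 + rowMat w) * (x : Matrix (Fin (m+1)) (Fin (m+1)) F) := rfl
  have hinv : (((rowUnit w * x)⁻¹ : GL (Fin (m+1)) F) : Matrix (Fin (m+1)) (Fin (m+1)) F)
      = ((x⁻¹ : GL (Fin (m+1)) F) : Matrix (Fin (m+1)) (Fin (m+1)) F) * (1 - rowMat w) := by
    rw [_root_.mul_inv_rev]; rfl
  rw [hval, hinv]
  have h1 : a * ((1 + rowMat w) * (x : Matrix (Fin (m+1)) (Fin (m+1)) F))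
      = a * (x : Matrix (Fin (m+1)) (Fin (m+1)) F) := by
    rw [← mul_assoc, mul_add, mul_one, mul_rowMat_eq_zero a ha, add_zero]
  rw [h1]
  set y : Matrix (Fin (m+1)) (Fin (m+1)) F := ((x⁻¹ : GL (Fin (m+1)) F) : Matrix (Fin (m+1)) (Fin (m+1)) F) with hy
  have h2 : a * (x : Matrix (Fin (m+1)) (Fin (m+1)) F) + y * (1 - rowMat w)
      = (a * (x : Matrix (Fin (m+1)) (Fin (m+1)) F) + y) - y * rowMat w := by
    rw [mul_sub, mul_one]
    abel
  rw [h2, Matrix.trace_sub, trace_mul_rowMat, sub_eq_add_neg, AddChar.map_add_eq_mul]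

lemma restr (φ : AddChar F ℂ) (hφ : φ ≠ 1) (a : Matrix (Fin (m+1)) (Fin (m+1)) F)
    (ha : ∀ i, a i 0 = 0) :
    (∑ x : GL (Fin (m+1)) F,
        if (∀ j : Fin m, ((x⁻¹ : GL (Fin (m+1)) F) : Matrix (Fin (m+1)) (Fin (m+1)) F) j.succ 0 = 0)
        then φ (Matrix.trace (a * (x : Matrix (Fin (m+1)) (Fin (m+1)) F) +
            ((x⁻¹ : GL (Fin (m+1)) F) : Matrix (Fin (m+1)) (Fin (m+1)) F))) else 0)
      = -(Fintype.card F : ℂ) ^ m * matKloosterman m φ (a.submatrix Fin.succ Fin.succ) := by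
  classical
  rw [← Finset.sum_filter]
  have hbij :
      ∑ x ∈ Finset.univ.filter (fun x : GL (Fin (m+1)) F =>
          ∀ j : Fin m, ((x⁻¹ : GL (Fin (m+1)) F) : Matrix (Fin (m+1)) (Fin (m+1)) F) j.succ 0 = 0),
        φ (Matrix.trace (a * (x : Matrix (Fin (m+1)) (Fin (m+1)) F) +
            ((x⁻¹ : GL (Fin (m+1)) F) : Matrix (Fin (m+1)) (Fin (m+1)) F)))
      = ∑ p : Fˣ × (Fin m → F) × GL (Fin m) F,
          φ (Matrix.trace (a.submatrix Fin.succ Fin.succ * (p.2.2 : Matrix (Fin m) (Fin m) F) +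
              ((p.2.2⁻¹ : GL (Fin m) F) : Matrix (Fin m) (Fin m) F)))
            * φ ((p.1⁻¹ : Fˣ) : F) := by
    refine (Finset.sum_bij (fun (p : Fˣ × (Fin m → F) × GL (Fin m) F) _ =>
      blkUnit p.1 p.2.1 p.2.2) ?_ ?_ ?_ ?_).symm
    · intro p _
      rw [Finset.mem_filter]
      refine ⟨Finset.mem_univ _, fun j => ?_⟩
      rw [blkUnit_inv]
      simp
    · intro p _ q _ h
      have hv := congrArg Units.val h
      rw [blkUnit_val, blkUnit_val] at hv
      have h00 := congrFun (congrFun hv 0) 0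
      simp only [blk00] at h00
      have hββ : p.2.1 = q.2.1 := by
        funext j
        have := congrFun (congrFun hv 0) j.succ
        simpa using this
      have hδδ : p.2.2 = q.2.2 := by
        apply Units.ext
        ext i j
        have := congrFun (congrFun hv i.succ) j.succ
        simpa using this
      exact Prod.ext (Units.ext h00) (Prod.ext hββ hδδ)
    · intro x hx
      rw [Finset.mem_filter] at hx
      obtain ⟨α, β, δ, hbd⟩ := eq_blkUnit x⁻¹ hx.2
      refine ⟨⟨α⁻¹, -((α⁻¹).val • (β ᵥ* (δ⁻¹).val)), δ⁻¹⟩, Finset.mem_univ _, ?_⟩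
      have : x = (blkUnit α β δ)⁻¹ := by rw [← hbd, inv_inv]
      rw [this, blkUnit_inv]
    · intro p _
      have hxinv : (((blkUnit p.1 p.2.1 p.2.2)⁻¹ : GL (Fin (m+1)) F) :
          Matrix (Fin (m+1)) (Fin (m+1)) F)
          = blk (p.1⁻¹).val (-((p.1⁻¹).val • (p.2.1 ᵥ* (p.2.2⁻¹).val))) (p.2.2⁻¹).val := by
        rw [blkUnit_inv]; rfl
      have ht : (a * (blkUnit p.1 p.2.1 p.2.2 : Matrix (Fin (m+1)) (Fin (m+1)) F) +
          (((blkUnit p.1 p.2.1 p.2.2)⁻¹ : GL (Fin (m+1)) F) :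
            Matrix (Fin (m+1)) (Fin (m+1)) F)).trace
          = (a.submatrix Fin.succ Fin.succ * (p.2.2 : Matrix (Fin m) (Fin m) F) +
              ((p.2.2⁻¹ : GL (Fin m) F) : Matrix (Fin m) (Fin m) F)).trace + ((p.1⁻¹ : Fˣ) : F) := by
        rw [blkUnit_val, hxinv, Matrix.trace_add, trace_mul_blk a ha, blk_trace,
          Matrix.trace_add]
        ring
      rw [ht, AddChar.map_add_eq_mul]
  rw [hbij, Fintype.sum_prod_type]
  have hα : ∀ α : Fˣ, (∑ p : (Fin m → F) × GL (Fin m) F,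
      φ (Matrix.trace (a.submatrix Fin.succ Fin.succ * (p.2 : Matrix (Fin m) (Fin m) F) +
          ((p.2⁻¹ : GL (Fin m) F) : Matrix (Fin m) (Fin m) F))) * φ ((α⁻¹ : Fˣ) : F))
      = ((Fintype.card F : ℂ) ^ m
          * matKloosterman m φ (a.submatrix Fin.succ Fin.succ)) * φ ((α⁻¹ : Fˣ) : F) := by
    intro α
    rw [Fintype.sum_prod_type]
    dsimp only
    rw [Finset.sum_const, Finset.card_univ, ← Finset.sum_mul, ← matK_def,
      Fintype.card_fun, Fintype.card_fin, nsmul_eq_mul]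
    push_cast
    ring
  simp only [hα]
  rw [← Finset.mul_sum]
  have hinvsum : ∑ α : Fˣ, φ ((α⁻¹ : Fˣ) : F) = -1 := by
    rw [← sum_char_units φ hφ]
    exact Fintype.sum_equiv (Equiv.inv Fˣ) _ _ fun α => rfl
  rw [hinvsum]
  ring

lemma step (φ : AddChar F ℂ) (hφ : φ ≠ 1) (a : Matrix (Fin (m+1)) (Fin (m+1)) F)
    (ha : ∀ i, a i 0 = 0) :
    matKloosterman (m+1) φ a
      = -(Fintype.card F : ℂ) ^ m * matKloosterman m φ (a.submatrix Fin.succ Fin.succ) := by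
  have hq : ((Fintype.card F : ℂ)) ^ m ≠ 0 :=
    pow_ne_zero _ (Nat.cast_ne_zero.2 Fintype.card_ne_zero)
  apply mul_left_cancel₀ hq
  have h1 : (Fintype.card F : ℂ) ^ m * matKloosterman (m+1) φ a
      = ∑ _w : Fin m → F, matKloosterman (m+1) φ a := by
    rw [Finset.sum_const, Finset.card_univ, Fintype.card_fun, Fintype.card_fin, nsmul_eq_mul]
    push_cast; ring
  rw [h1]
  calc ∑ _w : Fin m → F, matKloosterman (m+1) φ a
      = ∑ w : Fin m → F, ∑ x : GL (Fin (m+1)) F,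
          φ (Matrix.trace (a * (x : Matrix (Fin (m+1)) (Fin (m+1)) F) +
              ((x⁻¹ : GL (Fin (m+1)) F) : Matrix (Fin (m+1)) (Fin (m+1)) F)))
            * φ (-∑ j : Fin m,
                ((x⁻¹ : GL (Fin (m+1)) F) : Matrix (Fin (m+1)) (Fin (m+1)) F) j.succ 0 * w j) :=
        Finset.sum_congr rfl fun w _ => key_w φ a ha w
    _ = ∑ x : GL (Fin (m+1)) F,
          φ (Matrix.trace (a * (x : Matrix (Fin (m+1)) (Fin (m+1)) F) +
              ((x⁻¹ : GL (Fin (m+1)) F) : Matrix (Fin (m+1)) (Fin (m+1)) F)))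
            * ∑ w : Fin m → F, φ (-∑ j : Fin m,
                ((x⁻¹ : GL (Fin (m+1)) F) : Matrix (Fin (m+1)) (Fin (m+1)) F) j.succ 0 * w j) := by
        rw [Finset.sum_comm]
        exact Finset.sum_congr rfl fun x _ => (Finset.mul_sum _ _ _).symm
    _ = ∑ x : GL (Fin (m+1)) F,
          φ (Matrix.trace (a * (x : Matrix (Fin (m+1)) (Fin (m+1)) F) +
              ((x⁻¹ : GL (Fin (m+1)) F) : Matrix (Fin (m+1)) (Fin (m+1)) F)))
            * (if (∀ j : Fin m,
                ((x⁻¹ : GL (Fin (m+1)) F) : Matrix (Fin (m+1)) (Fin (m+1)) F) j.succ 0 = 0)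
              then (Fintype.card F : ℂ) ^ m else 0) := by
        refine Finset.sum_congr rfl fun x _ => ?_
        rw [sum_char_pi φ hφ]
    _ = (Fintype.card F : ℂ) ^ m * ∑ x : GL (Fin (m+1)) F,
          (if (∀ j : Fin m,
              ((x⁻¹ : GL (Fin (m+1)) F) : Matrix (Fin (m+1)) (Fin (m+1)) F) j.succ 0 = 0)
            then φ (Matrix.trace (a * (x : Matrix (Fin (m+1)) (Fin (m+1)) F) +
              ((x⁻¹ : GL (Fin (m+1)) F) : Matrix (Fin (m+1)) (Fin (m+1)) F))) else 0) := by
        rw [Finset.mul_sum]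
        refine Finset.sum_congr rfl fun x _ => ?_
        split_ifs <;> ring
    _ = (Fintype.card F : ℂ) ^ m * (-(Fintype.card F : ℂ) ^ m
          * matKloosterman m φ (a.submatrix Fin.succ Fin.succ)) := by
        rw [restr φ hφ a ha]

lemma base (φ : AddChar F ℂ) (a : Matrix (Fin 0) (Fin 0) F) : matKloosterman 0 φ a = 1 := by
  rw [matK_def]
  have h1 : ∀ x : GL (Fin 0) F,
      φ (Matrix.trace (a * (x : Matrix (Fin 0) (Fin 0) F) +
        ((x⁻¹ : GL (Fin 0) F) : Matrix (Fin 0) (Fin 0) F))) = 1 := by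
    intro x
    have : Matrix.trace (a * (x : Matrix (Fin 0) (Fin 0) F) +
        ((x⁻¹ : GL (Fin 0) F) : Matrix (Fin 0) (Fin 0) F)) = 0 := by
      simp [Matrix.trace]
    rw [this, AddChar.map_zero_eq_one]
  simp only [h1]
  rw [Finset.sum_const, Finset.card_univ]
  have hcard : Fintype.card (GL (Fin 0) F) = 1 := by
    rw [Fintype.card_eq_one_iff]
    exact ⟨1, fun x => Units.ext (by ext i j; exact i.elim0)⟩
  rw [hcard]
  simp

end MatKloos

/-- If `a` is nilpotent then `K_n(a) = (-1)^n q^{n(n-1)/2}`. -/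
theorem matKloosterman_nilpotent {F : Type*} [Field F] [Fintype F] [DecidableEq F]
    {n : ℕ} (φ : AddChar F ℂ) (hφ : φ ≠ 1)
    (a : Matrix (Fin n) (Fin n) F) (ha : IsNilpotent a) :
    matKloosterman n φ a = (-1) ^ n * (Fintype.card F : ℂ) ^ (n * (n - 1) / 2) := by
  induction n with
  | zero => simpa using MatKloos.base φ a
  | succ m ih =>
    obtain ⟨g, hg⟩ := MatKloos.exists_conj a ha
    set a' : Matrix (Fin (m+1)) (Fin (m+1)) F :=
      ((g⁻¹ : GL (Fin (m+1)) F) : Matrix (Fin (m+1)) (Fin (m+1)) F) * a *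
        (g : Matrix (Fin (m+1)) (Fin (m+1)) F) with ha'
    have hnil : IsNilpotent a' := by
      obtain ⟨k, hk⟩ := ha
      exact ⟨k, by rw [ha', Units.conj_pow', hk, mul_zero, zero_mul]⟩
    have hconj : matKloosterman (m+1) φ a = matKloosterman (m+1) φ a' :=
      (MatKloos.conj_inv φ a g).symm
    rw [hconj, MatKloos.step φ hφ a' hg,
      ih _ (MatKloos.sub_nilpotent a' hg hnil)]
    rw [Nat.triangle_succ, pow_add, pow_succ]
    ring
end

section
/- Let a be an upper triangular invertible n×n matrix over F_q and let w ∈ S_n with w² ≠ id. Then the Kloosterman sum over the Bruhat cell C_w = U_w w B vanishes: ∑_{x ∈ C_w} φ(tr(a x + x^{-1})) = 0. -/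
open Matrix
open scoped Classical

set_option linter.unusedSectionVars false

/-- The permutation matrix `w_σ = ∑_j E_{σ(j), j}`. -/
def permMat {F : Type*} [Field F] {n : ℕ} (σ : Equiv.Perm (Fin n)) :
    Matrix (Fin n) (Fin n) F :=
  Matrix.of fun i j => if σ j = i then 1 else 0

/-- Upper triangular matrices. -/
def UpperTri {F : Type*} [Field F] {n : ℕ} (M : Matrix (Fin n) (Fin n) F) : Prop :=
  ∀ i j : Fin n, j < i → M i j = 0

/-- Lower triangular matrices. -/
def LowerTri {F : Type*} [Field F] {n : ℕ} (M : Matrix (Fin n) (Fin n) F) : Prop :=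
  ∀ i j : Fin n, i < j → M i j = 0

/-- The Borel subgroup of invertible upper triangular matrices. -/
def borelGL (F : Type*) [Field F] (n : ℕ) : Set (GL (Fin n) F) :=
  {b | UpperTri (b : Matrix (Fin n) (Fin n) F)}

/-- `U_w = {u ∈ U | w⁻¹ u w lower triangular}`, `U` the upper triangular unipotent group. -/
def Uw (F : Type*) [Field F] {n : ℕ} (w : Equiv.Perm (Fin n)) : Set (GL (Fin n) F) :=
  {u | UpperTri (u : Matrix (Fin n) (Fin n) F) ∧
    (∀ i : Fin n, (u : Matrix (Fin n) (Fin n) F) i i = 1) ∧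
    LowerTri (permMat w⁻¹ * (u : Matrix (Fin n) (Fin n) F) * permMat w)}

/-- The Bruhat cell `C_w = U_w w B`. -/
def bruhatCell (F : Type*) [Field F] {n : ℕ} (w : Equiv.Perm (Fin n)) :
    Set (GL (Fin n) F) :=
  {x | ∃ u ∈ Uw F w, ∃ b ∈ borelGL F n,
    (x : Matrix (Fin n) (Fin n) F) =
      (u : Matrix (Fin n) (Fin n) F) * permMat w * (b : Matrix (Fin n) (Fin n) F)}

namespace KlAux

variable {F : Type*} [Field F] [Fintype F] [DecidableEq F] {n : ℕ}

lemma permMat_apply (σ : Equiv.Perm (Fin n)) (i j : Fin n) :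
    (permMat (F := F) σ) i j = if σ j = i then 1 else 0 := rfl

lemma permMat_mul_apply (σ : Equiv.Perm (Fin n)) (M : Matrix (Fin n) (Fin n) F) (i j : Fin n) :
    (permMat σ * M : Matrix (Fin n) (Fin n) F) i j = M (σ⁻¹ i) j := by
  rw [Matrix.mul_apply, Finset.sum_eq_single (σ⁻¹ i)]
  · simp [permMat_apply]
  · intro k _ hk
    have : σ k ≠ i := fun h => hk (by simp [← h])
    simp [permMat_apply, this]
  · simp

lemma mul_permMat_apply (σ : Equiv.Perm (Fin n)) (M : Matrix (Fin n) (Fin n) F) (i j : Fin n) :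
    (M * permMat σ : Matrix (Fin n) (Fin n) F) i j = M i (σ j) := by
  rw [Matrix.mul_apply, Finset.sum_eq_single (σ j)]
  · simp [permMat_apply]
  · intro k _ hk
    have : σ j ≠ k := fun h => hk h.symm
    simp [permMat_apply, this]
  · simp

lemma permMat_mul_permMat (σ τ : Equiv.Perm (Fin n)) :
    (permMat σ * permMat τ : Matrix (Fin n) (Fin n) F) = permMat (σ * τ) := by
  ext i j
  rw [mul_permMat_apply]
  simp only [permMat_apply, Equiv.Perm.mul_apply]
  by_cases h : σ (τ j) = i <;> simp [h]

lemma permMat_one : (permMat (1 : Equiv.Perm (Fin n)) : Matrix (Fin n) (Fin n) F) = 1 := by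
  ext i j
  simp [permMat_apply, Matrix.one_apply, eq_comm]

lemma permMat_mul_inv (σ : Equiv.Perm (Fin n)) :
    (permMat σ * permMat σ⁻¹ : Matrix (Fin n) (Fin n) F) = 1 := by
  rw [permMat_mul_permMat, mul_inv_cancel, permMat_one]

lemma permMat_inv_mul (σ : Equiv.Perm (Fin n)) :
    (permMat σ⁻¹ * permMat σ : Matrix (Fin n) (Fin n) F) = 1 := by
  rw [permMat_mul_permMat, inv_mul_cancel, permMat_one]

lemma isUnit_permMat (σ : Equiv.Perm (Fin n)) :
    IsUnit (permMat (F := F) σ) :=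
  ⟨⟨permMat σ, permMat σ⁻¹, permMat_mul_inv σ, permMat_inv_mul σ⟩, rfl⟩

lemma isUnit_det_permMat (σ : Equiv.Perm (Fin n)) :
    IsUnit (permMat (F := F) σ).det :=
  (Matrix.isUnit_iff_isUnit_det _).mp (isUnit_permMat σ)

lemma upperTri_mul {M N : Matrix (Fin n) (Fin n) F} (hM : UpperTri M) (hN : UpperTri N) :
    UpperTri (M * N) := by
  intro i j hij
  rw [Matrix.mul_apply]
  apply Finset.sum_eq_zero
  intro k _
  rcases lt_or_ge k i with h | h
  · rw [hM i k h, zero_mul]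
  · rw [hN k j (lt_of_lt_of_le hij h), mul_zero]

lemma upperTri_blockTriangular {M : Matrix (Fin n) (Fin n) F} (hM : UpperTri M) :
    M.BlockTriangular id := fun i j h => hM i j h

lemma upperTri_det {M : Matrix (Fin n) (Fin n) F} (hM : UpperTri M) :
    M.det = ∏ i, M i i :=
  Matrix.det_of_upperTriangular (upperTri_blockTriangular hM)

lemma diag_ne_zero {M : Matrix (Fin n) (Fin n) F} (hM : UpperTri M)
    (hd : M.det ≠ 0) : ∀ i, M i i ≠ 0 := by
  rw [upperTri_det hM] at hd
  intro i
  exact Finset.prod_ne_zero_iff.mp hd i (Finset.mem_univ i)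

/-- Diagonal 0/1 indicator matrix of a predicate. -/
noncomputable def ind (F : Type*) [Field F] {n : ℕ} (p : Fin n → Prop) :
    Matrix (Fin n) (Fin n) F :=
  Matrix.diagonal (fun i => if p i then 1 else 0)

lemma ind_mul_apply (p : Fin n → Prop) (M : Matrix (Fin n) (Fin n) F) (i j : Fin n) :
    (ind F p * M : Matrix (Fin n) (Fin n) F) i j = (if p i then 1 else 0) * M i j := by
  rw [ind, Matrix.diagonal_mul]

lemma mul_ind_apply (p : Fin n → Prop) (M : Matrix (Fin n) (Fin n) F) (i j : Fin n) :
    (M * ind F p : Matrix (Fin n) (Fin n) F) i j = M i j * (if p j then 1 else 0) := by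
  rw [ind, Matrix.mul_diagonal]

lemma sandwich_apply (p q : Fin n → Prop) (M : Matrix (Fin n) (Fin n) F) (i j : Fin n) :
    (ind F p * M * ind F q : Matrix (Fin n) (Fin n) F) i j
      = (if p i then 1 else 0) * M i j * (if q j then 1 else 0) := by
  rw [mul_ind_apply, ind_mul_apply]

end KlAux
namespace KlAux

variable {F : Type*} [Field F] [Fintype F] [DecidableEq F] {n : ℕ}

section RankLemmas

/-- Selection-of-rows matrix times `B` is a row submatrix. -/
lemma rowsel_mul {α : Type*} [Fintype α] [DecidableEq α] (f : α → Fin n)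
    (B : Matrix (Fin n) (Fin n) F) :
    ((1 : Matrix (Fin n) (Fin n) F).submatrix f id * B : Matrix α (Fin n) F)
      = B.submatrix f id := by
  ext t j
  rw [Matrix.mul_apply]
  simp only [Matrix.submatrix_apply, id_eq, Matrix.one_apply, ite_mul, one_mul, zero_mul]
  rw [Finset.sum_ite_eq]
  simp

lemma mul_colsel {α : Type*} [Fintype α] [DecidableEq α] (g : α → Fin n)
    (B : Matrix (Fin n) (Fin n) F) :
    (B * (1 : Matrix (Fin n) (Fin n) F).submatrix id g : Matrix (Fin n) α F)
      = B.submatrix id g := by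
  ext i t
  rw [Matrix.mul_apply]
  simp only [Matrix.submatrix_apply, id_eq, Matrix.one_apply, mul_ite, mul_one, mul_zero]
  rw [Finset.sum_ite_eq']
  simp

/-- Core lower bound: the rank of a matrix agreeing with an invertible upper triangular
matrix on a subtype diagonal block. -/
lemma card_le_rank_of_submatrix_eq {M A : Matrix (Fin n) (Fin n) F}
    (hM : UpperTri M) (hd : M.det ≠ 0) (T : Fin n → Prop)
    (hsub : ∀ i j : Fin n, T i → T j → A i j = M i j) :
    Nat.card {i : Fin n // T i} ≤ A.rank := by
  classical
  rw [Nat.card_eq_fintype_card]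
  set Rsel : Matrix {i : Fin n // T i} (Fin n) F :=
    (1 : Matrix (Fin n) (Fin n) F).submatrix Subtype.val id with hR
  set Csel : Matrix (Fin n) {i : Fin n // T i} F :=
    (1 : Matrix (Fin n) (Fin n) F).submatrix id Subtype.val with hC
  have hSub : Rsel * A * Csel = M.submatrix Subtype.val Subtype.val := by
    rw [hR, rowsel_mul]
    ext t s
    rw [Matrix.mul_apply]
    simp only [Matrix.submatrix_apply, id_eq, Matrix.one_apply, mul_ite, mul_one, mul_zero, hC]
    rw [Finset.sum_ite_eq']
    simp [hsub _ _ t.2 s.2]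
  have hdiag : ∀ i, M i i ≠ 0 := diag_ne_zero hM hd
  have hblock : (M.submatrix (Subtype.val : {i // T i} → Fin n) Subtype.val).BlockTriangular id := by
    intro t s hts
    exact hM _ _ (by exact_mod_cast hts)
  have hdet2 : (M.submatrix (Subtype.val : {i // T i} → Fin n) Subtype.val).det ≠ 0 := by
    rw [Matrix.det_of_upperTriangular hblock]
    exact Finset.prod_ne_zero_iff.mpr fun t _ => hdiag t
  have hunit : IsUnit (M.submatrix (Subtype.val : {i // T i} → Fin n) Subtype.val) :=
    (Matrix.isUnit_iff_isUnit_det _).mpr (isUnit_iff_ne_zero.mpr hdet2)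
  calc Fintype.card {i : Fin n // T i}
      = (M.submatrix (Subtype.val : {i // T i} → Fin n) Subtype.val).rank :=
        (Matrix.rank_of_isUnit _ hunit).symm
    _ = (Rsel * A * Csel).rank := by rw [hSub]
    _ = (Rsel * (A * Csel)).rank := by rw [Matrix.mul_assoc]
    _ ≤ (A * Csel).rank := Matrix.rank_mul_le_right _ _
    _ ≤ A.rank := Matrix.rank_mul_le_left _ _

lemma rank_ind_le (T : Fin n → Prop) :
    (ind F T).rank ≤ Nat.card {i : Fin n // T i} := by
  rw [ind, Matrix.rank_diagonal]
  exact le_of_eq ((Fintype.card_congr (Equiv.subtypeEquivRight (by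
    intro i; by_cases h : T i <;> simp [h]))).trans Nat.card_eq_fintype_card.symm)

/-- Rank formula: rows `≥ l` of an invertible upper triangular matrix, columns selected
by a predicate `p` (on the right). -/
lemma rank_rowcut_upper_colsel (l : ℕ) (p : Fin n → Prop) (M : Matrix (Fin n) (Fin n) F)
    (hM : UpperTri M) (hd : M.det ≠ 0) :
    (ind F (fun i => l ≤ (i : ℕ)) * M * ind F p : Matrix (Fin n) (Fin n) F).rank
      = Nat.card {i : Fin n // l ≤ (i : ℕ) ∧ p i} := by
  set A : Matrix (Fin n) (Fin n) F := ind F (fun i => l ≤ (i : ℕ)) * M * ind F p with hA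
  have hAapply : ∀ i j, A i j
      = (if l ≤ (i : ℕ) then 1 else 0) * M i j * (if p j then 1 else 0) := by
    intro i j; rw [hA, sandwich_apply]; split_ifs <;> rfl
  refine le_antisymm ?_ ?_
  · have hzero : A = A * ind F (fun i => l ≤ (i : ℕ) ∧ p i) := by
      ext i j
      rw [mul_ind_apply]
      by_cases hT : l ≤ (j : ℕ) ∧ p j
      · rw [if_pos hT, mul_one]
      · rw [if_neg hT, mul_zero, hAapply]
        by_cases hp : p j
        · have hjl : (j : ℕ) < l := by
            rcases not_and_or.mp hT with h | h
            · omega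
            · exact absurd hp h
          by_cases hi : l ≤ (i : ℕ)
          · rw [hM i j (by rw [Fin.lt_def]; omega)]; ring
          · rw [if_neg hi]; ring
        · rw [if_neg hp]; ring
    calc A.rank = (A * ind F (fun i => l ≤ (i : ℕ) ∧ p i)).rank := by rw [← hzero]
      _ ≤ (ind F (fun i => l ≤ (i : ℕ) ∧ p i) : Matrix (Fin n) (Fin n) F).rank :=
          Matrix.rank_mul_le_right _ _
      _ ≤ _ := rank_ind_le _
  · refine card_le_rank_of_submatrix_eq hM hd (fun i => l ≤ (i : ℕ) ∧ p i) ?_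
    intro i j hi hj
    rw [hAapply, if_pos hi.1, if_pos hj.2, one_mul, mul_one]

/-- Rank formula: rows selected by a predicate `p` of an invertible upper triangular
matrix, columns `≤ m`. -/
lemma rank_rowsel_upper_colcut (p : Fin n → Prop) (m : ℕ) (M : Matrix (Fin n) (Fin n) F)
    (hM : UpperTri M) (hd : M.det ≠ 0) :
    (ind F p * M * ind F (fun i => (i : ℕ) ≤ m) : Matrix (Fin n) (Fin n) F).rank
      = Nat.card {i : Fin n // p i ∧ (i : ℕ) ≤ m} := by
  set A : Matrix (Fin n) (Fin n) F := ind F p * M * ind F (fun i => (i : ℕ) ≤ m) with hA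
  have hAapply : ∀ i j, A i j
      = (if p i then 1 else 0) * M i j * (if (j : ℕ) ≤ m then 1 else 0) := by
    intro i j; rw [hA, sandwich_apply]; split_ifs <;> rfl
  refine le_antisymm ?_ ?_
  · have hzero : A = ind F (fun i => p i ∧ (i : ℕ) ≤ m) * A := by
      ext i j
      rw [ind_mul_apply]
      by_cases hT : p i ∧ (i : ℕ) ≤ m
      · rw [if_pos hT, one_mul]
      · rw [if_neg hT, zero_mul, hAapply]
        by_cases hp : p i
        · have him : m < (i : ℕ) := by
            rcases not_and_or.mp hT with h | h
            · exact absurd hp h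
            · omega
          by_cases hj : (j : ℕ) ≤ m
          · rw [hM i j (by rw [Fin.lt_def]; omega)]; ring
          · rw [if_neg hj]; ring
        · rw [if_neg hp]; ring
    calc A.rank = (ind F (fun i => p i ∧ (i : ℕ) ≤ m) * A).rank := by rw [← hzero]
      _ ≤ (ind F (fun i => p i ∧ (i : ℕ) ≤ m) : Matrix (Fin n) (Fin n) F).rank :=
          Matrix.rank_mul_le_left _ _
      _ ≤ _ := rank_ind_le _
  · refine card_le_rank_of_submatrix_eq hM hd (fun i => p i ∧ (i : ℕ) ≤ m) ?_
    intro i j hi hj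
    rw [hAapply, if_pos hi.1, if_pos hj.2, one_mul, mul_one]

end RankLemmas

end KlAux
namespace KlAux

variable {n : ℕ}

/-- Counting function `N_σ(m,l) = #\{m' ≤ m : σ(m') ≥ l\}`. -/
noncomputable def cnt (σ : Equiv.Perm (Fin n)) (m l : ℕ) : ℕ :=
  Nat.card {m' : Fin n // (m' : ℕ) ≤ m ∧ l ≤ ((σ m' : Fin n) : ℕ)}

lemma cnt_eq_filter (σ : Equiv.Perm (Fin n)) (m l : ℕ) :
    cnt σ m l = (Finset.univ.filter
      (fun m' : Fin n => (m' : ℕ) ≤ m ∧ l ≤ ((σ m' : Fin n) : ℕ))).card := by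
  rw [cnt, Nat.card_eq_fintype_card, Fintype.card_subtype]

lemma cnt_split (τ : Equiv.Perm (Fin n)) (m : ℕ) (l : Fin n) :
    cnt τ m (l : ℕ) = cnt τ m ((l : ℕ) + 1)
      + (if ((τ⁻¹ l : Fin n) : ℕ) ≤ m then 1 else 0) := by
  classical
  rw [cnt_eq_filter, cnt_eq_filter]
  have hps : (Finset.univ.filter
        (fun m' : Fin n => (m' : ℕ) ≤ m ∧ (l : ℕ) ≤ ((τ m' : Fin n) : ℕ)))
      = (Finset.univ.filter
          (fun m' : Fin n => (m' : ℕ) ≤ m ∧ (l : ℕ) + 1 ≤ ((τ m' : Fin n) : ℕ)))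
        ∪ (Finset.univ.filter
          (fun m' : Fin n => (m' : ℕ) ≤ m ∧ τ m' = l)) := by
    ext m'
    simp only [Finset.mem_union, Finset.mem_filter, Finset.mem_univ, true_and]
    constructor
    · rintro ⟨h1, h2⟩
      rcases eq_or_lt_of_le h2 with h | h
      · exact Or.inr ⟨h1, Fin.ext h.symm⟩
      · exact Or.inl ⟨h1, h⟩
    · rintro (⟨h1, h2⟩ | ⟨h1, h2⟩)
      · exact ⟨h1, by omega⟩
      · exact ⟨h1, by rw [h2]⟩
  rw [hps, Finset.card_union_of_disjoint]
  · congr 1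
    by_cases hc : ((τ⁻¹ l : Fin n) : ℕ) ≤ m
    · rw [if_pos hc]
      have hone : (Finset.univ.filter
          (fun m' : Fin n => (m' : ℕ) ≤ m ∧ τ m' = l)) = {τ⁻¹ l} := by
        ext m'
        simp only [Finset.mem_filter, Finset.mem_univ, true_and, Finset.mem_singleton]
        constructor
        · rintro ⟨_, h2⟩
          rw [← h2]; simp
        · rintro rfl; exact ⟨hc, by simp⟩
      rw [hone, Finset.card_singleton]
    · rw [if_neg hc, Finset.card_eq_zero]
      ext m'
      simp only [Finset.mem_filter, Finset.mem_univ, true_and, Finset.notMem_empty, iff_false,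
        not_and]
      intro h1 h2
      apply hc
      have : m' = τ⁻¹ l := by rw [← h2]; simp
      rwa [← this]
  · rw [Finset.disjoint_left]
    intro m' hm1 hm2
    simp only [Finset.mem_filter, Finset.mem_univ, true_and] at hm1 hm2
    have := hm2.2
    have hv : ((τ m' : Fin n) : ℕ) = (l : ℕ) := by rw [this]
    omega

lemma cnt_mismatch (σ : Equiv.Perm (Fin n)) (hσ : σ * σ ≠ 1) :
    ∃ m l : ℕ, m < l ∧ cnt σ m l ≠ cnt σ⁻¹ m l := by
  by_contra hcon
  push_neg at hcon
  apply hσ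
  have step1 : ∀ (l : Fin n) (m : ℕ), m < (l : ℕ) →
      (((σ⁻¹ l : Fin n) : ℕ) ≤ m ↔ ((σ l : Fin n) : ℕ) ≤ m) := by
    intro l m hm
    have e1 := cnt_split σ m l
    have e2 := cnt_split σ⁻¹ m l
    rw [inv_inv] at e2
    have h0 := hcon m (l : ℕ) hm
    have h1 := hcon m ((l : ℕ) + 1) (by omega)
    rw [e1, e2, h1] at h0
    by_cases hA : ((σ⁻¹ l : Fin n) : ℕ) ≤ m <;> by_cases hB : ((σ l : Fin n) : ℕ) ≤ m <;>
      simp only [hA, hB, ↓reduceIte] at h0 ⊢ <;> omega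
  have key : ∀ p : Fin n, σ p = σ⁻¹ p := by
    by_contra hk
    push_neg at hk
    obtain ⟨p0, hp0⟩ := hk
    classical
    set D : Finset (Fin n) := Finset.univ.filter (fun p => σ p ≠ σ⁻¹ p) with hD
    have hne : D.Nonempty := ⟨p0, by rw [hD]; exact Finset.mem_filter.mpr ⟨Finset.mem_univ _, hp0⟩⟩
    have hmem : ∀ p ∈ D, (p : ℕ) < ((σ p : Fin n) : ℕ) ∧ (p : ℕ) < ((σ⁻¹ p : Fin n) : ℕ) := by
      intro p hp
      have hpd : σ p ≠ σ⁻¹ p := by simpa [hD] using hp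
      have hfix : ((σ p : Fin n) : ℕ) ≠ (p : ℕ) := by
        intro h
        have h' : σ p = p := Fin.ext h
        have h'' : σ⁻¹ p = p := by
          nth_rewrite 1 [← h']
          exact Equiv.symm_apply_apply σ p
        exact hpd (h'.trans h''.symm)
      have hfix' : ((σ⁻¹ p : Fin n) : ℕ) ≠ (p : ℕ) := by
        intro h
        have h' : σ⁻¹ p = p := Fin.ext h
        have h'' : σ p = p := by
          nth_rewrite 1 [← h']
          exact Equiv.apply_symm_apply σ p
        exact hpd (h''.trans h'.symm)
      rcases lt_or_gt_of_ne hfix with hlt | hgt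
      · -- σ p < p : derive contradiction
        exfalso
        have hle1 : ((σ⁻¹ p : Fin n) : ℕ) ≤ ((σ p : Fin n) : ℕ) :=
          (step1 p ((σ p : Fin n) : ℕ) hlt).mpr le_rfl
        have hle2 : ((σ p : Fin n) : ℕ) ≤ ((σ⁻¹ p : Fin n) : ℕ) :=
          (step1 p ((σ⁻¹ p : Fin n) : ℕ) (by omega)).mp le_rfl
        exact hpd (Fin.ext (by omega))
      · -- p < σ p
        refine ⟨hgt, ?_⟩
        rcases lt_or_gt_of_ne hfix' with hlt' | hgt'
        · exfalso
          have hle2 : ((σ p : Fin n) : ℕ) ≤ ((σ⁻¹ p : Fin n) : ℕ) :=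
            (step1 p ((σ⁻¹ p : Fin n) : ℕ) hlt').mp le_rfl
          omega
        · exact hgt'
    set ps := D.max' hne with hps
    have hpsD : ps ∈ D := D.max'_mem hne
    have h1 := hmem ps hpsD
    set q := σ ps with hq
    have hqD : q ∉ D := by
      intro hqmem
      have := D.le_max' q hqmem
      rw [← hps] at this
      have : (q : ℕ) ≤ (ps : ℕ) := this
      omega
    have hqeq : σ q = σ⁻¹ q := by
      by_contra hne2
      exact hqD (by rw [hD]; exact Finset.mem_filter.mpr ⟨Finset.mem_univ _, hne2⟩)
    have h2 : σ⁻¹ q = ps := by rw [hq]; simp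
    have h3 : σ q = ps := by rw [hqeq, h2]
    have h4 : σ⁻¹ ps = q := by rw [← h3]; simp
    have hcontra : σ ps = σ⁻¹ ps := by rw [h4, hq]
    exact absurd hcontra (by simpa [hD] using hpsD)
  ext p
  simp only [Equiv.Perm.mul_apply, Equiv.Perm.one_apply, Equiv.Perm.coe_mul, Function.comp_apply,
    Equiv.Perm.coe_one, id_eq]
  rw [key p]
  simp

end KlAux
namespace KlAux

variable {F : Type*} [Field F] [Fintype F] [DecidableEq F] {n : ℕ}

lemma cnt_eq_of_block_eq (σ : Equiv.Perm (Fin n))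
    (M M' b b' : Matrix (Fin n) (Fin n) F)
    (hM : UpperTri M) (hMd : M.det ≠ 0)
    (hM' : UpperTri M') (hM'd : M'.det ≠ 0)
    (hb : UpperTri b) (hbd : b.det ≠ 0)
    (hb' : UpperTri b') (hb'd : b'.det ≠ 0)
    (m l : ℕ) (hml : m < l)
    (heq : ∀ i j : Fin n, (j : ℕ) ≤ m → m < (i : ℕ) →
      (M * permMat σ * b : Matrix (Fin n) (Fin n) F) i j
        = (b' * permMat σ⁻¹ * M' : Matrix (Fin n) (Fin n) F) i j) :
    cnt σ m l = cnt σ⁻¹ m l := by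
  classical
  set W : Matrix (Fin n) (Fin n) F := permMat σ with hW
  set Wi : Matrix (Fin n) (Fin n) F := permMat σ⁻¹ with hWi
  set Dl : Matrix (Fin n) (Fin n) F := ind F (fun i => l ≤ (i : ℕ)) with hDl
  set Em : Matrix (Fin n) (Fin n) F := ind F (fun i => (i : ℕ) ≤ m) with hEm
  set DJ : Matrix (Fin n) (Fin n) F := ind F (fun i => ((σ⁻¹ i : Fin n) : ℕ) ≤ m) with hDJ
  set DS : Matrix (Fin n) (Fin n) F := ind F (fun j => l ≤ ((σ⁻¹ j : Fin n) : ℕ)) with hDS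
  -- the two modified triangular matrices
  set btil : Matrix (Fin n) (Fin n) F :=
    Matrix.of (fun i j => if (j : ℕ) ≤ m then b i j else (if i = j then (1 : F) else 0))
    with hbtil
  set bhat : Matrix (Fin n) (Fin n) F :=
    Matrix.of (fun i j => if l ≤ (i : ℕ) then b' i j else (if i = j then (1 : F) else 0))
    with hbhat
  have hbtil_apply : ∀ i j, btil i j
      = if (j : ℕ) ≤ m then b i j else (if i = j then (1 : F) else 0) := fun i j => rfl
  have hbhat_apply : ∀ i j, bhat i j
      = if l ≤ (i : ℕ) then b' i j else (if i = j then (1 : F) else 0) := fun i j => rfl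
  have hbtil_tri : UpperTri btil := by
    intro i j hij
    rw [hbtil_apply]
    by_cases h : (j : ℕ) ≤ m
    · rw [if_pos h]; exact hb i j hij
    · rw [if_neg h, if_neg (Fin.ne_of_gt hij)]
  have hbhat_tri : UpperTri bhat := by
    intro i j hij
    rw [hbhat_apply]
    by_cases h : l ≤ (i : ℕ)
    · rw [if_pos h]; exact hb' i j hij
    · rw [if_neg h, if_neg (Fin.ne_of_gt hij)]
  have hbtil_det : btil.det ≠ 0 := by
    rw [upperTri_det hbtil_tri]
    refine Finset.prod_ne_zero_iff.mpr fun i _ => ?_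
    rw [hbtil_apply]
    by_cases h : (i : ℕ) ≤ m
    · rw [if_pos h]; exact diag_ne_zero hb hbd i
    · rw [if_neg h, if_pos rfl]; exact one_ne_zero
  have hbhat_det : bhat.det ≠ 0 := by
    rw [upperTri_det hbhat_tri]
    refine Finset.prod_ne_zero_iff.mpr fun i _ => ?_
    rw [hbhat_apply]
    by_cases h : l ≤ (i : ℕ)
    · rw [if_pos h]; exact diag_ne_zero hb' hb'd i
    · rw [if_neg h, if_pos rfl]; exact one_ne_zero
  -- commutation identities
  have hEmbtil : Em * btil = b * Em := by
    ext i j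
    rw [hEm, ind_mul_apply, mul_ind_apply, hbtil_apply]
    by_cases hj : (j : ℕ) ≤ m
    · rw [if_pos hj, if_pos hj]
      by_cases hi : (i : ℕ) ≤ m
      · rw [if_pos hi, one_mul, mul_one]
      · rw [if_neg hi, zero_mul, hb i j (by rw [Fin.lt_def]; omega), mul_one]
    · rw [if_neg hj, if_neg hj, mul_zero]
      by_cases hij : i = j
      · subst hij
        rw [if_pos rfl, if_neg hj, zero_mul]
      · rw [if_neg hij, mul_zero]
  have hbhatDl : bhat * Dl = Dl * b' := by
    ext i j
    rw [hDl, ind_mul_apply, mul_ind_apply, hbhat_apply]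
    by_cases hj : l ≤ (j : ℕ)
    · rw [if_pos hj, mul_one]
      by_cases hi : l ≤ (i : ℕ)
      · rw [if_pos hi, if_pos hi, one_mul]
      · rw [if_neg hi, if_neg hi, zero_mul,
          if_neg (show i ≠ j from fun h => hi (h ▸ hj))]
    · rw [if_neg hj, mul_zero]
      by_cases hi : l ≤ (i : ℕ)
      · rw [if_pos hi, one_mul]
        exact (hb' i j (by rw [Fin.lt_def]; omega)).symm
      · rw [if_neg hi, zero_mul]
  have hWEm : W * Em = DJ * W := by
    ext i j
    rw [hW, hEm, hDJ, mul_ind_apply, ind_mul_apply]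
    by_cases h : σ j = i
    · have h' : σ⁻¹ i = j := by rw [← h]; simp
      rw [permMat_apply, if_pos h, h', one_mul, mul_one]
    · rw [permMat_apply, if_neg h, zero_mul, mul_zero]
  have hDlWi : Dl * Wi = Wi * DS := by
    ext i j
    rw [hDl, hDS, hWi, mul_ind_apply, ind_mul_apply]
    by_cases h : σ⁻¹ j = i
    · rw [permMat_apply, if_pos h, ← h, mul_one, one_mul]
    · rw [permMat_apply, if_neg h, zero_mul, mul_zero]
  -- the block equality as a matrix identity
  have hblock : Dl * (M * W * b) * Em = Dl * (b' * Wi * M') * Em := by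
    ext i j
    rw [hDl, hEm, sandwich_apply, sandwich_apply]
    by_cases hi : l ≤ (i : ℕ)
    · by_cases hj : (j : ℕ) ≤ m
      · rw [heq i j hj (by omega)]
      · rw [if_neg hj, mul_zero, mul_zero]
    · rw [if_neg hi]
      simp
  -- rank of the left-hand side
  have hrankL : (Dl * (M * W * b) * Em).rank
      = Nat.card {i : Fin n // l ≤ (i : ℕ) ∧ ((σ⁻¹ i : Fin n) : ℕ) ≤ m} := by
    calc (Dl * (M * W * b) * Em).rank
        = ((Dl * M * W * Em) * btil).rank := by
          rw [show (Dl * M * W * Em) * btil = Dl * (M * W * b) * Em by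
            rw [Matrix.mul_assoc (Dl * M * W) Em btil, hEmbtil]
            simp only [Matrix.mul_assoc]]
      _ = (Dl * M * W * Em).rank :=
          Matrix.rank_mul_eq_left_of_isUnit_det btil _ (isUnit_iff_ne_zero.mpr hbtil_det)
      _ = ((Dl * M * DJ) * W).rank := by
          rw [show (Dl * M * DJ) * W = Dl * M * W * Em by
            rw [Matrix.mul_assoc (Dl * M) DJ W, ← hWEm, ← Matrix.mul_assoc]]
      _ = (Dl * M * DJ).rank :=
          Matrix.rank_mul_eq_left_of_isUnit_det W _ (hW ▸ isUnit_det_permMat σ)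
      _ = Nat.card {i : Fin n // l ≤ (i : ℕ) ∧ ((σ⁻¹ i : Fin n) : ℕ) ≤ m} :=
          rank_rowcut_upper_colsel l (fun i => ((σ⁻¹ i : Fin n) : ℕ) ≤ m) M hM hMd
  -- rank of the right-hand side
  have hrankR : (Dl * (b' * Wi * M') * Em).rank
      = Nat.card {j : Fin n // l ≤ ((σ⁻¹ j : Fin n) : ℕ) ∧ (j : ℕ) ≤ m} := by
    calc (Dl * (b' * Wi * M') * Em).rank
        = (bhat * (Dl * Wi * M' * Em)).rank := by
          rw [show bhat * (Dl * Wi * M' * Em) = Dl * (b' * Wi * M') * Em by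
            simp only [← Matrix.mul_assoc]
            rw [hbhatDl]]
      _ = (Dl * Wi * M' * Em).rank :=
          Matrix.rank_mul_eq_right_of_isUnit_det bhat _ (isUnit_iff_ne_zero.mpr hbhat_det)
      _ = (Wi * (DS * M' * Em)).rank := by
          rw [show Wi * (DS * M' * Em) = Dl * Wi * M' * Em by
            simp only [← Matrix.mul_assoc]
            rw [← hDlWi]]
      _ = (DS * M' * Em).rank :=
          Matrix.rank_mul_eq_right_of_isUnit_det Wi _ (hWi ▸ isUnit_det_permMat σ⁻¹)
      _ = Nat.card {j : Fin n // l ≤ ((σ⁻¹ j : Fin n) : ℕ) ∧ (j : ℕ) ≤ m} :=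
          rank_rowsel_upper_colcut (fun j => l ≤ ((σ⁻¹ j : Fin n) : ℕ)) m M' hM' hM'd
  -- identify the cardinalities with the counting function
  have hcard1 : Nat.card {i : Fin n // l ≤ (i : ℕ) ∧ ((σ⁻¹ i : Fin n) : ℕ) ≤ m}
      = cnt σ m l := by
    rw [cnt]
    refine Nat.card_congr (Equiv.subtypeEquiv (σ⁻¹ : Equiv.Perm (Fin n)) ?_)
    intro i
    constructor
    · rintro ⟨h1, h2⟩
      exact ⟨h2, by simpa using h1⟩
    · rintro ⟨h1, h2⟩
      exact ⟨by simpa using h2, h1⟩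
  have hcard2 : Nat.card {j : Fin n // l ≤ ((σ⁻¹ j : Fin n) : ℕ) ∧ (j : ℕ) ≤ m}
      = cnt σ⁻¹ m l := by
    rw [cnt]
    exact Nat.card_congr (Equiv.subtypeEquivRight (fun j => and_comm))
  rw [← hcard1, ← hcard2, ← hrankL, ← hrankR, hblock]

end KlAux
namespace KlAux

variable {F : Type*} [Field F] [Fintype F] [DecidableEq F] {n : ℕ}

/-- Strictly-block-upper matrix supported on rows `≤ m`, columns `> m`. -/
def zmat (m : ℕ) (v : Fin n × Fin n → F) : Matrix (Fin n) (Fin n) F :=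
  Matrix.of fun i j => if (i : ℕ) ≤ m ∧ m < (j : ℕ) then v (i, j) else 0

lemma zmat_apply (m : ℕ) (v : Fin n × Fin n → F) (i j : Fin n) :
    zmat m v i j = if (i : ℕ) ≤ m ∧ m < (j : ℕ) then v (i, j) else 0 := rfl

lemma zmat_mul_zmat (m : ℕ) (v v' : Fin n × Fin n → F) :
    (zmat m v * zmat m v' : Matrix (Fin n) (Fin n) F) = 0 := by
  ext i j
  rw [Matrix.mul_apply, Matrix.zero_apply]
  apply Finset.sum_eq_zero
  intro k _
  rw [zmat_apply, zmat_apply]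
  split_ifs with h1 h2
  · exact absurd h2.1 (by omega)
  · rw [mul_zero]
  · rw [zero_mul]
  · rw [zero_mul]

lemma zmat_neg (m : ℕ) (v : Fin n × Fin n → F) :
    zmat m (fun q => -(v q)) = -(zmat m v) := by
  ext i j
  rw [Matrix.neg_apply, zmat_apply, zmat_apply]
  split_ifs <;> simp

lemma one_add_zmat_mul (m : ℕ) (v : Fin n × Fin n → F) :
    ((1 + zmat m v) * (1 - zmat m v) : Matrix (Fin n) (Fin n) F) = 1 := by
  have h : (1 + zmat m v) * (1 - zmat m v)
      = 1 - (zmat m v * zmat m v : Matrix (Fin n) (Fin n) F) := by noncomm_ring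
  rw [h, zmat_mul_zmat, sub_zero]

lemma one_sub_zmat_mul (m : ℕ) (v : Fin n × Fin n → F) :
    ((1 - zmat m v) * (1 + zmat m v) : Matrix (Fin n) (Fin n) F) = 1 := by
  have h : (1 - zmat m v) * (1 + zmat m v)
      = 1 - (zmat m v * zmat m v : Matrix (Fin n) (Fin n) F) := by noncomm_ring
  rw [h, zmat_mul_zmat, sub_zero]

/-- The unipotent element `1 + z_v` of `GL`. -/
noncomputable def zeta (m : ℕ) (v : Fin n × Fin n → F) : GL (Fin n) F :=
  ⟨1 + zmat m v, 1 - zmat m v, one_add_zmat_mul m v, one_sub_zmat_mul m v⟩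

lemma zeta_val (m : ℕ) (v : Fin n × Fin n → F) :
    ((zeta m v : GL (Fin n) F) : Matrix (Fin n) (Fin n) F) = 1 + zmat m v := rfl

lemma zeta_inv_val (m : ℕ) (v : Fin n × Fin n → F) :
    (((zeta m v)⁻¹ : GL (Fin n) F) : Matrix (Fin n) (Fin n) F) = 1 - zmat m v := rfl

lemma zeta_inv (m : ℕ) (v : Fin n × Fin n → F) :
    (zeta m v)⁻¹ = zeta m (fun q => -(v q)) := by
  apply Units.ext
  rw [zeta_inv_val, zeta_val, zmat_neg, sub_eq_add_neg]

lemma upperTri_one_add_zmat (m : ℕ) (v : Fin n × Fin n → F) :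
    UpperTri (1 + zmat m v : Matrix (Fin n) (Fin n) F) := by
  intro i j hij
  have hval : (j : ℕ) < (i : ℕ) := hij
  rw [Matrix.add_apply, Matrix.one_apply_ne (Fin.ne_of_gt hij), zero_add, zmat_apply,
    if_neg (by omega)]

lemma cell_mul_zeta (w : Equiv.Perm (Fin n)) (m : ℕ) (x : GL (Fin n) F)
    (hx : x ∈ bruhatCell F w) (v : Fin n × Fin n → F) :
    x * zeta m v ∈ bruhatCell F w := by
  obtain ⟨u, hu, b, hb, hxval⟩ := hx
  refine ⟨u, hu, b * zeta m v, ?_, ?_⟩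
  · show UpperTri ((b * zeta m v : GL (Fin n) F) : Matrix (Fin n) (Fin n) F)
    rw [Units.val_mul, zeta_val]
    exact upperTri_mul hb (upperTri_one_add_zmat m v)
  · rw [Units.val_mul, Units.val_mul, zeta_val, hxval]
    simp only [Matrix.mul_assoc]

/-- The basic trace-shift identity under `x ↦ x · ζ_v`. -/
lemma trace_shift (a : Matrix (Fin n) (Fin n) F) (m : ℕ) (x : GL (Fin n) F)
    (v : Fin n × Fin n → F) :
    Matrix.trace (a * ((x * zeta m v : GL (Fin n) F) : Matrix (Fin n) (Fin n) F)
        + (((x * zeta m v)⁻¹ : GL (Fin n) F) : Matrix (Fin n) (Fin n) F))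
      = Matrix.trace (a * (x : Matrix (Fin n) (Fin n) F)
          + ((x⁻¹ : GL (Fin n) F) : Matrix (Fin n) (Fin n) F))
        + Matrix.trace ((a * (x : Matrix (Fin n) (Fin n) F)
            - ((x⁻¹ : GL (Fin n) F) : Matrix (Fin n) (Fin n) F)) * zmat m v) := by
  have h1 : ((x * zeta m v : GL (Fin n) F) : Matrix (Fin n) (Fin n) F)
      = (x : Matrix (Fin n) (Fin n) F) * (1 + zmat m v) := by
    rw [Units.val_mul, zeta_val]
  have h2 : (((x * zeta m v)⁻¹ : GL (Fin n) F) : Matrix (Fin n) (Fin n) F)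
      = (1 - zmat m v) * ((x⁻¹ : GL (Fin n) F) : Matrix (Fin n) (Fin n) F) := by
    rw [_root_.mul_inv_rev, Units.val_mul, zeta_inv_val]
  rw [h1, h2]
  have expand : a * ((x : Matrix (Fin n) (Fin n) F) * (1 + zmat m v))
      + (1 - zmat m v) * ((x⁻¹ : GL (Fin n) F) : Matrix (Fin n) (Fin n) F)
      = (a * (x : Matrix (Fin n) (Fin n) F)
          + ((x⁻¹ : GL (Fin n) F) : Matrix (Fin n) (Fin n) F))
        + (a * (x : Matrix (Fin n) (Fin n) F) * zmat m v
            - zmat m v * ((x⁻¹ : GL (Fin n) F) : Matrix (Fin n) (Fin n) F)) := by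
    noncomm_ring
  rw [expand, Matrix.trace_add]
  congr 1
  rw [Matrix.sub_mul, Matrix.trace_sub, Matrix.trace_sub,
    Matrix.trace_mul_comm (zmat m v) ((x⁻¹ : GL (Fin n) F) : Matrix (Fin n) (Fin n) F)]

lemma addChar_sum_eq_prod (φ : AddChar F ℂ) {ι : Type*} (s : Finset ι) (g : ι → F) :
    φ (∑ i ∈ s, g i) = ∏ i ∈ s, φ (g i) := by
  induction s using Finset.cons_induction with
  | empty => simp
  | cons a s ha ih => rw [Finset.sum_cons, Finset.prod_cons, AddChar.map_add_eq_mul, ih]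

lemma sum_addchar_linear (φ : AddChar F ℂ) (hφ : φ ≠ 1) {ι : Type*} [Fintype ι]
    [DecidableEq ι] (c : ι → F) (i0 : ι) (hc : c i0 ≠ 0) :
    ∑ v : ι → F, φ (∑ q, v q * c q) = 0 := by
  rw [Finset.sum_congr rfl (fun v _ => addChar_sum_eq_prod φ Finset.univ (fun q => v q * c q))]
  rw [← Fintype.prod_sum (fun (q : ι) (t : F) => φ (t * c q))]
  apply Finset.prod_eq_zero (Finset.mem_univ i0)
  have hrw : ∀ t : F, φ (t * c i0) = (φ.mulShift (c i0)) t := by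
    intro t; rw [AddChar.mulShift_apply, mul_comm]
  rw [Finset.sum_congr rfl (fun t _ => hrw t)]
  refine AddChar.sum_eq_zero_iff_ne_zero.mpr ?_
  intro h0
  have h1 : φ.mulShift (c i0) = 1 := h0
  exact hφ ((AddChar.mulShift_unit_eq_one_iff φ (isUnit_iff_ne_zero.mpr hc)).mp h1)

/-- Every element of the Bruhat cell has a nonzero entry of `ax - x⁻¹` in the
lower-left block, provided the counting functions mismatch. -/
lemma exists_block_entry (w : Equiv.Perm (Fin n)) (a : Matrix (Fin n) (Fin n) F)
    (ha : UpperTri a) (had : a.det ≠ 0) (m l : ℕ) (hml : m < l)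
    (hne : cnt w m l ≠ cnt w⁻¹ m l) (x : GL (Fin n) F) (hx : x ∈ bruhatCell F w) :
    ∃ q : Fin n × Fin n, ((q.1 : ℕ) ≤ m ∧ m < (q.2 : ℕ)) ∧
      (a * (x : Matrix (Fin n) (Fin n) F)
        - ((x⁻¹ : GL (Fin n) F) : Matrix (Fin n) (Fin n) F)) q.2 q.1 ≠ 0 := by
  by_contra hcon
  push_neg at hcon
  apply hne
  obtain ⟨u, hu, b, hb, hxval⟩ := hx
  have hutri : UpperTri ((u : GL (Fin n) F) : Matrix (Fin n) (Fin n) F) := hu.1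
  have hbtri : UpperTri ((b : GL (Fin n) F) : Matrix (Fin n) (Fin n) F) := hb
  have hudet : (((u : GL (Fin n) F) : Matrix (Fin n) (Fin n) F)).det ≠ 0 :=
    ((Matrix.isUnit_iff_isUnit_det _).mp u.isUnit).ne_zero
  have hbdet : (((b : GL (Fin n) F) : Matrix (Fin n) (Fin n) F)).det ≠ 0 :=
    ((Matrix.isUnit_iff_isUnit_det _).mp b.isUnit).ne_zero
  have huinvdet : (((u⁻¹ : GL (Fin n) F) : Matrix (Fin n) (Fin n) F)).det ≠ 0 :=
    ((Matrix.isUnit_iff_isUnit_det _).mp (u⁻¹).isUnit).ne_zero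
  have hbinvdet : (((b⁻¹ : GL (Fin n) F) : Matrix (Fin n) (Fin n) F)).det ≠ 0 :=
    ((Matrix.isUnit_iff_isUnit_det _).mp (b⁻¹).isUnit).ne_zero
  have huinvtri : UpperTri ((u⁻¹ : GL (Fin n) F) : Matrix (Fin n) (Fin n) F) := by
    have h1 : ((u⁻¹ : GL (Fin n) F) : Matrix (Fin n) (Fin n) F)
        = ((u : GL (Fin n) F) : Matrix (Fin n) (Fin n) F)⁻¹ := Matrix.coe_units_inv u
    rw [h1]
    have : Invertible ((u : GL (Fin n) F) : Matrix (Fin n) (Fin n) F) := u.invertible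
    intro i j hij
    exact Matrix.blockTriangular_inv_of_blockTriangular (upperTri_blockTriangular hutri) hij
  have hbinvtri : UpperTri ((b⁻¹ : GL (Fin n) F) : Matrix (Fin n) (Fin n) F) := by
    have h1 : ((b⁻¹ : GL (Fin n) F) : Matrix (Fin n) (Fin n) F)
        = ((b : GL (Fin n) F) : Matrix (Fin n) (Fin n) F)⁻¹ := Matrix.coe_units_inv b
    rw [h1]
    have : Invertible ((b : GL (Fin n) F) : Matrix (Fin n) (Fin n) F) := b.invertible
    intro i j hij
    exact Matrix.blockTriangular_inv_of_blockTriangular (upperTri_blockTriangular hbtri) hij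
  -- express x⁻¹
  set Wu : GL (Fin n) F := ⟨permMat w, permMat w⁻¹, permMat_mul_inv w, permMat_inv_mul w⟩
    with hWu
  have hxu : x = u * Wu * b := by
    apply Units.ext
    rw [Units.val_mul, Units.val_mul]
    exact hxval
  have hxinv : ((x⁻¹ : GL (Fin n) F) : Matrix (Fin n) (Fin n) F)
      = ((b⁻¹ : GL (Fin n) F) : Matrix (Fin n) (Fin n) F) * permMat w⁻¹
          * ((u⁻¹ : GL (Fin n) F) : Matrix (Fin n) (Fin n) F) := by
    rw [hxu, _root_.mul_inv_rev, _root_.mul_inv_rev, Units.val_mul, Units.val_mul, ← Matrix.mul_assoc]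
    rfl
  refine cnt_eq_of_block_eq w (a * ((u : GL (Fin n) F) : Matrix (Fin n) (Fin n) F))
    ((u⁻¹ : GL (Fin n) F) : Matrix (Fin n) (Fin n) F)
    ((b : GL (Fin n) F) : Matrix (Fin n) (Fin n) F)
    ((b⁻¹ : GL (Fin n) F) : Matrix (Fin n) (Fin n) F)
    (upperTri_mul ha hutri) ?_ huinvtri huinvdet hbtri hbdet hbinvtri hbinvdet m l hml ?_
  · rw [Matrix.det_mul]; exact mul_ne_zero had hudet
  · intro i j hj hi
    have h0 := hcon (j, i) ⟨hj, hi⟩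
    rw [Matrix.sub_apply, sub_eq_zero] at h0
    have hA : a * ((u : GL (Fin n) F) : Matrix (Fin n) (Fin n) F) * permMat w
        * ((b : GL (Fin n) F) : Matrix (Fin n) (Fin n) F)
        = a * ((x : GL (Fin n) F) : Matrix (Fin n) (Fin n) F) := by
      rw [hxval]
      simp only [Matrix.mul_assoc]
    rw [hA, h0, hxinv]

end KlAux
/-- If `a` is upper triangular and invertible, and `w² ≠ 1`, then the Kloosterman sum
over the Bruhat cell `C_w` vanishes. -/
theorem kloosterman_bruhat_cell_vanishes {F : Type*} [Field F] [Fintype F] [DecidableEq F]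
    {n : ℕ} (φ : AddChar F ℂ) (hφ : φ ≠ 1)
    (a : Matrix (Fin n) (Fin n) F) (ha : UpperTri a) (hinv : IsUnit a)
    (w : Equiv.Perm (Fin n)) (hw : w ^ 2 ≠ 1) :
    (∑ x ∈ Finset.univ.filter (fun x : GL (Fin n) F => x ∈ bruhatCell F w),
      φ (Matrix.trace (a * (x : Matrix (Fin n) (Fin n) F) +
          ((x⁻¹ : GL (Fin n) F) : Matrix (Fin n) (Fin n) F)))) = 0 := by
  classical
  have hσ : w * w ≠ 1 := by
    intro h
    exact hw (by rw [pow_two]; exact h)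
  obtain ⟨m, l, hml, hne⟩ := KlAux.cnt_mismatch w hσ
  have had : a.det ≠ 0 := ((Matrix.isUnit_iff_isUnit_det a).mp hinv).ne_zero
  set cs : Finset (GL (Fin n) F) :=
    Finset.univ.filter (fun x : GL (Fin n) F => x ∈ bruhatCell F w) with hcs
  set f : GL (Fin n) F → ℂ := fun x =>
    φ (Matrix.trace (a * (x : Matrix (Fin n) (Fin n) F) +
        ((x⁻¹ : GL (Fin n) F) : Matrix (Fin n) (Fin n) F))) with hf
  show (∑ x ∈ cs, f x) = 0
  -- reindexing under right multiplication by ζ_v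
  have hclosed : ∀ (v : Fin n × Fin n → F) (x : GL (Fin n) F),
      x ∈ cs ↔ x * KlAux.zeta m v ∈ cs := by
    intro v x
    simp only [hcs, Finset.mem_filter, Finset.mem_univ, true_and]
    constructor
    · intro h; exact KlAux.cell_mul_zeta w m x h v
    · intro h
      have h2 := KlAux.cell_mul_zeta w m _ h (fun q => -(v q))
      rwa [mul_assoc, ← KlAux.zeta_inv, mul_inv_cancel, mul_one] at h2
  have hreindex : ∀ v : Fin n × Fin n → F,
      (∑ x ∈ cs, f (x * KlAux.zeta m v)) = ∑ x ∈ cs, f x := by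
    intro v
    refine Finset.sum_equiv (Equiv.mulRight (KlAux.zeta m v)) ?_ ?_
    · intro x
      rw [Equiv.coe_mulRight]
      exact hclosed v x
    · intro x _
      rw [Equiv.coe_mulRight]
  -- the trace-shift identity
  have hkey : ∀ (x : GL (Fin n) F) (v : Fin n × Fin n → F),
      f (x * KlAux.zeta m v)
        = f x * φ (Matrix.trace ((a * (x : Matrix (Fin n) (Fin n) F)
            - ((x⁻¹ : GL (Fin n) F) : Matrix (Fin n) (Fin n) F)) * KlAux.zmat m v)) := by
    intro x v
    rw [hf]
    simp only []
    rw [KlAux.trace_shift a m x v, AddChar.map_add_eq_mul]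
  -- inner character sum vanishes
  have hinner : ∀ x ∈ cs,
      (∑ v : Fin n × Fin n → F,
        φ (Matrix.trace ((a * (x : Matrix (Fin n) (Fin n) F)
            - ((x⁻¹ : GL (Fin n) F) : Matrix (Fin n) (Fin n) F)) * KlAux.zmat m v))) = 0 := by
    intro x hx
    have hxcell : x ∈ bruhatCell F w := (Finset.mem_filter.mp hx).2
    obtain ⟨q0, hq0, hd⟩ := KlAux.exists_block_entry w a ha had m l hml hne x hxcell
    set d : Matrix (Fin n) (Fin n) F :=
      a * (x : Matrix (Fin n) (Fin n) F)
        - ((x⁻¹ : GL (Fin n) F) : Matrix (Fin n) (Fin n) F) with hdd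
    have htr : ∀ v : Fin n × Fin n → F,
        Matrix.trace (d * KlAux.zmat m v)
          = ∑ q : Fin n × Fin n,
              v q * (if (q.1 : ℕ) ≤ m ∧ m < (q.2 : ℕ) then d q.2 q.1 else 0) := by
      intro v
      calc Matrix.trace (d * KlAux.zmat m v)
          = ∑ i : Fin n, ∑ k : Fin n, d i k * KlAux.zmat m v k i := by
            rw [Matrix.trace]
            apply Finset.sum_congr rfl
            intro i _
            rw [Matrix.diag_apply, Matrix.mul_apply]
        _ = ∑ k : Fin n, ∑ i : Fin n, d i k * KlAux.zmat m v k i := Finset.sum_comm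
        _ = ∑ q : Fin n × Fin n,
              v q * (if (q.1 : ℕ) ≤ m ∧ m < (q.2 : ℕ) then d q.2 q.1 else 0) := by
            rw [Fintype.sum_prod_type]
            apply Finset.sum_congr rfl
            intro k _
            apply Finset.sum_congr rfl
            intro i _
            rw [KlAux.zmat_apply]
            by_cases h : (k : ℕ) ≤ m ∧ m < (i : ℕ)
            · rw [if_pos h, if_pos h, mul_comm]
            · rw [if_neg h, if_neg h, mul_zero, mul_zero]
    rw [Finset.sum_congr rfl (fun v _ => by rw [htr v])]
    exact KlAux.sum_addchar_linear φ hφ _ q0 (by rw [if_pos hq0]; exact hd)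
  -- averaging
  have big : (Fintype.card (Fin n × Fin n → F)) • (∑ x ∈ cs, f x)
      = ∑ v : Fin n × Fin n → F, ∑ x ∈ cs, f (x * KlAux.zeta m v) := by
    rw [Finset.sum_congr rfl (fun v _ => hreindex v), Finset.sum_const, Finset.card_univ]
  rw [Finset.sum_comm] at big
  have hzero : (∑ x ∈ cs, ∑ v : Fin n × Fin n → F, f (x * KlAux.zeta m v)) = 0 := by
    apply Finset.sum_eq_zero
    intro x hx
    rw [Finset.sum_congr rfl (fun v _ => hkey x v), ← Finset.mul_sum, hinner x hx, mul_zero]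
  rw [hzero] at big
  have hcard : ((Fintype.card (Fin n × Fin n → F) : ℂ)) ≠ 0 :=
    Nat.cast_ne_zero.mpr Fintype.card_ne_zero
  rw [nsmul_eq_mul] at big
  exact (mul_eq_zero.mp big).resolve_left hcard
end
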